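/- For every integer q ≥ 2, the biclique covering number of the grid graph G_{2,q} equals q − 1. -/

import Mathlib

/-- The grid graph `G_{p,q}` with vertex set `{1,…,q} × {1,…,p}` (modelled as
`Fin q × Fin p`), where two vertices are adjacent iff their coordinates differ
by a total of 1. -/
def gridGraph (p q : ℕ) : SimpleGraph (Fin q × Fin p) where
  Adj v w := Nat.dist (v.1 : ℕ) (w.1 : ℕ) + Nat.dist (v.2 : ℕ) (w.2 : ℕ) = 1
  symm := by
    constructor
    intro v w h
    rwa [Nat.dist_comm ((w.1 : ℕ)), Nat.dist_comm ((w.2 : ℕ))]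
  loopless := by
    constructor
    intro v h
    simp [Nat.dist_self] at h

/-- `H` is a biclique of `G`: a subgraph of `G` that is a complete bipartite
graph with parts `A` and `B`. -/
def IsBiclique {V : Type*} (G H : SimpleGraph V) : Prop :=
  H ≤ G ∧ ∃ A B : Set V, ∀ v w, H.Adj v w ↔ (v ∈ A ∧ w ∈ B) ∨ (v ∈ B ∧ w ∈ A)

/-- The biclique covering number of `G`: the least `n` such that `n` bicliques
of `G` cover all edges of `G`. -/
noncomputable def bcn {V : Type*} (G : SimpleGraph V) : ℕ :=
  sInf {n | ∃ H : Fin n → SimpleGraph V,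
    (∀ i, IsBiclique G (H i)) ∧ ∀ e ∈ G.edgeSet, ∃ i, e ∈ (H i).edgeSet}

/- Auxiliary definitions and lemmas -/

lemma grid_adj_iff {p q : ℕ} (v w : Fin q × Fin p) :
    (gridGraph p q).Adj v w ↔
      Nat.dist (v.1 : ℕ) (w.1 : ℕ) + Nat.dist (v.2 : ℕ) (w.2 : ℕ) = 1 := Iff.rfl

/-- One part of the 4-cycle biclique on columns `k, k+1`. -/
def bicP (q k : ℕ) (v : Fin q × Fin 2) : Prop :=
  ((v.1 : ℕ) = k ∧ (v.2 : ℕ) = 0) ∨ ((v.1 : ℕ) = k + 1 ∧ (v.2 : ℕ) = 1)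

/-- Other part of the 4-cycle biclique on columns `k, k+1`. -/
def bicQ (q k : ℕ) (v : Fin q × Fin 2) : Prop :=
  ((v.1 : ℕ) = k ∧ (v.2 : ℕ) = 1) ∨ ((v.1 : ℕ) = k + 1 ∧ (v.2 : ℕ) = 0)

/-- The 4-cycle biclique on columns `k, k+1` of the grid `G_{2,q}`. -/
def bic (q k : ℕ) : SimpleGraph (Fin q × Fin 2) where
  Adj v w := (bicP q k v ∧ bicQ q k w) ∨ (bicQ q k v ∧ bicP q k w)
  symm := by constructor; intro v w h; tauto
  loopless := by
    constructor
    intro v h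
    unfold bicP bicQ at h
    omega

lemma bic_adj_iff {q k : ℕ} (v w : Fin q × Fin 2) :
    (bic q k).Adj v w ↔
      (bicP q k v ∧ bicQ q k w) ∨ (bicQ q k v ∧ bicP q k w) := Iff.rfl

lemma bic_le (q k : ℕ) : bic q k ≤ gridGraph 2 q := by
  intro v w hvw
  rw [bic_adj_iff] at hvw
  rw [grid_adj_iff]
  unfold bicP bicQ at hvw
  simp only [Nat.dist]
  omega

lemma bic_isBiclique (q k : ℕ) : IsBiclique (gridGraph 2 q) (bic q k) := by
  refine ⟨bic_le q k, {v | bicP q k v}, {v | bicQ q k v}, fun v w => Iff.rfl⟩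

lemma bic_cover (q : ℕ) (hq : 2 ≤ q) (v w : Fin q × Fin 2)
    (h : (gridGraph 2 q).Adj v w) :
    ∃ k : ℕ, k < q - 1 ∧ (bic q k).Adj v w := by
  rw [grid_adj_iff] at h
  refine ⟨min (min (v.1 : ℕ) (w.1 : ℕ)) (q - 2), ?_, ?_⟩
  · have := v.1.isLt
    omega
  · rw [bic_adj_iff]
    unfold bicP bicQ
    have h1 := v.1.isLt
    have h2 := w.1.isLt
    have h3 := v.2.isLt
    have h4 := w.2.isLt
    simp only [Nat.dist] at h
    omega

/-- Key lemma: if a biclique of the grid contains two horizontal edges, then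
either they are in the same row at column distance at most 1, or they are in
different rows at the same column. -/
lemma pair_lemma {q : ℕ} {H : SimpleGraph (Fin q × Fin 2)}
    (hB : IsBiclique (gridGraph 2 q) H)
    (a a' c c' : Fin q) (b b' : Fin 2)
    (ha : (a' : ℕ) = (a : ℕ) + 1) (hc : (c' : ℕ) = (c : ℕ) + 1)
    (h1 : H.Adj (a, b) (a', b)) (h2 : H.Adj (c, b') (c', b')) :
    ((b : ℕ) = (b' : ℕ) → (a : ℕ) ≤ (c : ℕ) + 1 ∧ (c : ℕ) ≤ (a : ℕ) + 1) ∧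
    ((b : ℕ) ≠ (b' : ℕ) → (a : ℕ) = (c : ℕ)) := by
  obtain ⟨hle, A, B, hAB⟩ := hB
  have m1 := (hAB _ _).mp h1
  have m2 := (hAB _ _).mp h2
  rcases m1 with ⟨h1a, h1b⟩ | ⟨h1a, h1b⟩ <;> rcases m2 with ⟨h2a, h2b⟩ | ⟨h2a, h2b⟩
  · have g1 := hle ((hAB (a, b) (c', b')).mpr (Or.inl ⟨h1a, h2b⟩))
    have g2 := hle ((hAB (c, b') (a', b)).mpr (Or.inl ⟨h2a, h1b⟩))
    rw [grid_adj_iff] at g1 g2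
    simp only [Nat.dist] at g1 g2
    omega
  · have g1 := hle ((hAB (a, b) (c, b')).mpr (Or.inl ⟨h1a, h2a⟩))
    have g2 := hle ((hAB (a', b) (c', b')).mpr (Or.inr ⟨h1b, h2b⟩))
    rw [grid_adj_iff] at g1 g2
    simp only [Nat.dist] at g1 g2
    omega
  · have g1 := hle ((hAB (a, b) (c, b')).mpr (Or.inr ⟨h1a, h2a⟩))
    have g2 := hle ((hAB (a', b) (c', b')).mpr (Or.inl ⟨h1b, h2b⟩))
    rw [grid_adj_iff] at g1 g2
    simp only [Nat.dist] at g1 g2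
    omega
  · have g1 := hle ((hAB (a, b) (c', b')).mpr (Or.inr ⟨h1a, h2b⟩))
    have g2 := hle ((hAB (c, b') (a', b)).mpr (Or.inr ⟨h2a, h1b⟩))
    rw [grid_adj_iff] at g1 g2
    simp only [Nat.dist] at g1 g2
    omega

/-- Left column of a horizontal edge. -/
def colL (q : ℕ) (i : Fin (q - 1)) : Fin q :=
  ⟨i.1, lt_of_lt_of_le i.isLt (Nat.sub_le q 1)⟩

/-- Right column of a horizontal edge. -/
def colR (q : ℕ) (i : Fin (q - 1)) : Fin q :=
  ⟨i.1 + 1, by have := i.isLt; omega⟩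

theorem bc_grid_two_rows (q : ℕ) (hq : 2 ≤ q) :
    bcn (gridGraph 2 q) = q - 1 := by
  have hmem : (q - 1) ∈ {n | ∃ H : Fin n → SimpleGraph (Fin q × Fin 2),
      (∀ i, IsBiclique (gridGraph 2 q) (H i)) ∧
      ∀ e ∈ (gridGraph 2 q).edgeSet, ∃ i, e ∈ (H i).edgeSet} := by
    refine ⟨fun i => bic q i.1, fun i => bic_isBiclique q i.1, ?_⟩
    intro e
    induction e using Sym2.ind with
    | _ v w =>
      intro he
      rw [SimpleGraph.mem_edgeSet] at he
      obtain ⟨k, hk, hadj⟩ := bic_cover q hq v w he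
      exact ⟨⟨k, hk⟩, (SimpleGraph.mem_edgeSet _).mpr hadj⟩
  refine le_antisymm (Nat.sInf_le hmem) (le_csInf ⟨_, hmem⟩ ?_)
  intro n hn
  obtain ⟨H, hBic, hCov⟩ := hn
  -- the horizontal edge at gap `x.1`, row `x.2`, lies in some biclique
  have key : ∀ x : Fin (q - 1) × Fin 2,
      ∃ k : Fin n, (H k).Adj (colL q x.1, x.2) (colR q x.1, x.2) := by
    intro x
    have hadj : (gridGraph 2 q).Adj (colL q x.1, x.2) (colR q x.1, x.2) := by
      rw [grid_adj_iff]
      show Nat.dist (x.1 : ℕ) ((x.1 : ℕ) + 1) + Nat.dist (x.2 : ℕ) (x.2 : ℕ) = 1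
      simp [Nat.dist]
    obtain ⟨k, hk⟩ := hCov _ ((SimpleGraph.mem_edgeSet _).mpr hadj)
    exact ⟨k, (SimpleGraph.mem_edgeSet _).mp hk⟩
  choose g hg using key
  -- each biclique contains at most two horizontal edges
  have hfib : ∀ k : Fin n,
      (Finset.univ.filter fun x : Fin (q - 1) × Fin 2 => g x = k).card ≤ 2 := by
    intro k
    by_contra hcon
    push_neg at hcon
    rw [Finset.two_lt_card_iff] at hcon
    obtain ⟨x, y, z, hx, hy, hz, hxy, hxz, hyz⟩ := hcon
    simp only [Finset.mem_filter, Finset.mem_univ, true_and] at hx hy hz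
    have ex := hg x; rw [hx] at ex
    have ey := hg y; rw [hy] at ey
    have ez := hg z; rw [hz] at ez
    have p12 := pair_lemma (hBic k) (colL q x.1) (colR q x.1)
      (colL q y.1) (colR q y.1) x.2 y.2 rfl rfl ex ey
    have p13 := pair_lemma (hBic k) (colL q x.1) (colR q x.1)
      (colL q z.1) (colR q z.1) x.2 z.2 rfl rfl ex ez
    have p23 := pair_lemma (hBic k) (colL q y.1) (colR q y.1)
      (colL q z.1) (colR q z.1) y.2 z.2 rfl rfl ey ez
    simp only [colL, colR] at p12 p13 p23
    rw [Ne, Prod.ext_iff, Fin.ext_iff, Fin.ext_iff] at hxy hxz hyz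
    have b1 := x.2.isLt
    have b2 := y.2.isLt
    have b3 := z.2.isLt
    omega
  -- counting
  have hcount := Finset.card_eq_sum_card_fiberwise
    (s := (Finset.univ : Finset (Fin (q - 1) × Fin 2)))
    (t := (Finset.univ : Finset (Fin n))) (f := g)
    (fun x _ => Finset.mem_univ (g x))
  have hle2 : (Finset.univ : Finset (Fin (q - 1) × Fin 2)).card ≤ n * 2 := by
    rw [hcount]
    calc ∑ k ∈ Finset.univ,
          (Finset.univ.filter fun x : Fin (q - 1) × Fin 2 => g x = k).card
        ≤ ∑ _k ∈ (Finset.univ : Finset (Fin n)), 2 :=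
          Finset.sum_le_sum fun k _ => hfib k
      _ = n * 2 := by simp [Finset.sum_const, Finset.card_univ, mul_comm]
  have hcard : (Finset.univ : Finset (Fin (q - 1) × Fin 2)).card = (q - 1) * 2 := by
    simp [Finset.card_univ]
  omega
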